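/- Let G ⊆ {1,…,n} and write Q(G) = {x ∈ G : u_x > 2}. Then the set {B_{G,a,G} : a ⊆ Q(G)} is an F-basis of the subalgebra E*_G T E*_G of the Terwilliger F-algebra T, and for all H, I ⊆ Q(G): B_{G,H,G} · B_{G,I,G} = (k_{H∩I} mod char F) · B_{G,H∪I,G}, where k_S = ∏_{x∈S}(u_x − 1). -/
import Mathlib

set_option linter.unusedSectionVars false

open Finset

variable {n : ℕ} {U : Fin n → Type*} [∀ i, Fintype (U i)] [∀ i, DecidableEq (U i)]
variable (F : Type*) [Field F]

/-- `D(y,z) = {i : y i ≠ z i}`. -/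
def Dst (y z : ∀ i, U i) : Finset (Fin n) := univ.filter (fun i => y i ≠ z i)

/-- Adjacency matrix of the relation indexed by `S`. -/
def adjMat (S : Finset (Fin n)) : Matrix (∀ i, U i) (∀ i, U i) F :=
  fun y z => if Dst y z = S then 1 else 0

/-- Dual idempotent with respect to the base point `x`. -/
def dualIdem (x : ∀ i, U i) (S : Finset (Fin n)) : Matrix (∀ i, U i) (∀ i, U i) F :=
  Matrix.diagonal (fun y => if Dst x y = S then 1 else 0)

/-- The Terwilliger `F`-algebra of the factorial scheme with base point `x`. -/
def TerwAlg (x : ∀ i, U i) : Subalgebra F (Matrix (∀ i, U i) (∀ i, U i) F) :=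
  Algebra.adjoin F (Set.range (adjMat F) ∪ Set.range (dualIdem F x))

/-- `B_{A,B,C} = ∑_{AΔC ⊆ b ⊆ B} E*_A A_b E*_C`. -/
def Bmat (x : ∀ i, U i) (A B C : Finset (Fin n)) : Matrix (∀ i, U i) (∀ i, U i) F :=
  ∑ b ∈ B.powerset.filter (fun b => symmDiff A C ⊆ b),
    dualIdem F x A * adjMat F b * dualIdem F x C

/-- `k_S = ∏_{x ∈ S} (u_x - 1)`. -/
def kval (u : Fin n → ℕ) (S : Finset (Fin n)) : ℕ := ∏ i ∈ S, (u i - 1)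

lemma mem_Dst {y z : ∀ i, U i} {i : Fin n} : i ∈ Dst y z ↔ y i ≠ z i := by
  simp [Dst]

lemma Bmat_apply (x : ∀ i, U i) (G B : Finset (Fin n)) (y z : ∀ i, U i) :
    Bmat F x G B G y z
      = if Dst x y = G ∧ Dst x z = G ∧ Dst y z ⊆ B then 1 else 0 := by
  classical
  have hfilter : B.powerset.filter (fun b => symmDiff G G ⊆ b) = B.powerset := by
    simp [symmDiff_self]
  have hterm : ∀ b : Finset (Fin n),
      (dualIdem F x G * adjMat F b * dualIdem F x G : Matrix (∀ i, U i) (∀ i, U i) F) y z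
      = if Dst y z = b then
          (if Dst x y = G then (1:F) else 0) * (if Dst x z = G then 1 else 0) else 0 := by
    intro b
    simp only [dualIdem, Matrix.mul_diagonal, Matrix.diagonal_mul, adjMat]
    split_ifs <;> ring
  rw [Bmat, Matrix.sum_apply, hfilter]
  simp only [hterm]
  rw [Finset.sum_ite_eq]
  by_cases h1 : Dst x y = G <;> by_cases h2 : Dst x z = G <;> by_cases h3 : Dst y z ⊆ B <;>
    simp [h1, h2, h3, mem_powerset]

lemma Bmat_mul (u : Fin n → ℕ) (hu : ∀ i, Fintype.card (U i) = u i)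
    (x : ∀ i, U i) (G : Finset (Fin n)) {H I : Finset (Fin n)}
    (hH : H ⊆ G.filter (fun i => 2 < u i)) (hI : I ⊆ G.filter (fun i => 2 < u i)) :
    Bmat F x G H G * Bmat F x G I G = (kval u (H ∩ I) : F) • Bmat F x G (H ∪ I) G := by
  classical
  have hHG : ∀ {i}, i ∈ H → i ∈ G ∧ 2 < u i := fun hi => mem_filter.1 (hH hi) |>.imp id id
  have hIG : ∀ {i}, i ∈ I → i ∈ G ∧ 2 < u i := fun hi => mem_filter.1 (hI hi) |>.imp id id
  ext y z
  rw [Matrix.mul_apply, Matrix.smul_apply, smul_eq_mul]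
  simp only [Bmat_apply]
  by_cases hy : Dst x y = G
  swap
  · simp [hy]
  by_cases hz : Dst x z = G
  swap
  · simp [hz]
  simp only [hy, hz, true_and]
  have hyG : ∀ j, x j ≠ y j ↔ j ∈ G := fun j => by rw [← hy]; exact mem_Dst.symm
  have hzG : ∀ j, x j ≠ z j ↔ j ∈ G := fun j => by rw [← hz]; exact mem_Dst.symm
  set s : ∀ i, Finset (U i) := fun i => univ.filter (fun a =>
    (i ∈ G → x i ≠ a) ∧ (i ∉ G → x i = a) ∧ (i ∉ H → y i = a) ∧ (i ∉ I → a = z i)) with hs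
  have hiff : ∀ w : ∀ i, U i,
      ((Dst x w = G ∧ Dst y w ⊆ H) ∧ (Dst x w = G ∧ Dst w z ⊆ I)) ↔
        w ∈ Fintype.piFinset s := by
    intro w
    simp only [Fintype.mem_piFinset, hs, mem_filter, mem_univ, true_and]
    constructor
    · rintro ⟨⟨h1, h2⟩, ⟨-, h3⟩⟩ i
      refine ⟨fun hiG => mem_Dst.1 (by rw [h1]; exact hiG), ?_, ?_, ?_⟩
      · intro hiG; by_contra hne
        exact hiG (by rw [← h1]; exact mem_Dst.2 hne)
      · intro hiH; by_contra hne
        exact hiH (h2 (mem_Dst.2 hne))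
      · intro hiI; by_contra hne
        exact hiI (h3 (mem_Dst.2 hne))
    · intro h
      refine ⟨⟨?_, ?_⟩, ⟨?_, ?_⟩⟩
      · ext i
        rw [mem_Dst]
        constructor
        · intro hne; by_contra hiG; exact hne ((h i).2.1 hiG)
        · exact fun hiG => (h i).1 hiG
      · intro i hi; by_contra hiH; exact (mem_Dst.1 hi) ((h i).2.2.1 hiH)
      · ext i
        rw [mem_Dst]
        constructor
        · intro hne; by_contra hiG; exact hne ((h i).2.1 hiG)
        · exact fun hiG => (h i).1 hiG
      · intro i hi; by_contra hiI; exact (mem_Dst.1 hi) ((h i).2.2.2 hiI)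
  have hsum : (∑ w : ∀ i, U i,
      (if Dst x w = G ∧ Dst y w ⊆ H then (1:F) else 0) *
        (if Dst x w = G ∧ Dst w z ⊆ I then 1 else 0))
      = ((Fintype.piFinset s).card : F) := by
    have : ∀ w : ∀ i, U i,
        (if Dst x w = G ∧ Dst y w ⊆ H then (1:F) else 0) *
          (if Dst x w = G ∧ Dst w z ⊆ I then 1 else 0)
        = if w ∈ Fintype.piFinset s then 1 else 0 := by
      intro w
      by_cases h1 : Dst x w = G ∧ Dst y w ⊆ H <;> by_cases h2 : Dst x w = G ∧ Dst w z ⊆ I <;>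
        simp [h1, h2, ← hiff w]
    simp only [this]
    rw [Finset.sum_boole]
    have huf : univ.filter (fun w => w ∈ Fintype.piFinset s) = Fintype.piFinset s := by
      ext w; simp
    rw [huf]
  rw [hsum, Fintype.card_piFinset]
  by_cases hyz : Dst y z ⊆ H ∪ I
  · have hcards : ∀ i, (s i).card = if i ∈ H ∩ I then u i - 1 else 1 := by
      intro i
      by_cases hiH : i ∈ H <;> by_cases hiI : i ∈ I
      · have hiG := (hHG hiH).1
        have : s i = univ.erase (x i) := by
          ext a
          simp only [hs, mem_filter, mem_univ, true_and, mem_erase]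
          constructor
          · rintro ⟨h1, -, -, -⟩; exact ⟨(h1 hiG).symm, trivial⟩
          · rintro ⟨h1, -⟩
            exact ⟨fun _ => Ne.symm h1, fun hg => absurd hiG hg, fun hh => absurd hiH hh,
              fun hh => absurd hiI hh⟩
        rw [this, Finset.card_erase_of_mem (mem_univ _), Finset.card_univ, hu]
        simp [mem_inter, hiH, hiI]
      · have hiG := (hHG hiH).1
        have : s i = {z i} := by
          ext a
          simp only [hs, mem_filter, mem_univ, true_and, mem_singleton]
          constructor
          · rintro ⟨-, -, -, h4⟩; exact h4 hiI
          · rintro rfl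
            exact ⟨fun _ => hzG _ |>.2 hiG, fun hg => absurd hiG hg, fun hh => absurd hiH hh,
              fun _ => rfl⟩
        rw [this, Finset.card_singleton]
        simp [mem_inter, hiI]
      · have hiG := (hIG hiI).1
        have : s i = {y i} := by
          ext a
          simp only [hs, mem_filter, mem_univ, true_and, mem_singleton]
          constructor
          · rintro ⟨-, -, h3, -⟩; exact (h3 hiH).symm
          · rintro rfl
            exact ⟨fun _ => hyG _ |>.2 hiG, fun hg => absurd hiG hg, fun _ => rfl,
              fun hh => absurd hiI hh⟩
        rw [this, Finset.card_singleton]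
        simp [mem_inter, hiH]
      · have hyzi : y i = z i := by
          by_contra hne
          rcases mem_union.1 (hyz (mem_Dst.2 hne)) with h | h
          exacts [hiH h, hiI h]
        have : s i = {y i} := by
          ext a
          simp only [hs, mem_filter, mem_univ, true_and, mem_singleton]
          constructor
          · rintro ⟨-, -, h3, -⟩; exact (h3 hiH).symm
          · rintro rfl
            refine ⟨fun hg => hyG _ |>.2 hg, fun hg => ?_, fun _ => rfl, fun _ => hyzi⟩
            by_contra hne
            exact hg ((hyG _).1 hne)
        rw [this, Finset.card_singleton]
        simp [mem_inter, hiH]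
    simp only [hcards]
    rw [Finset.prod_ite_mem, Finset.univ_inter]
    rw [if_pos hyz, mul_one, kval]
  · obtain ⟨i, hiD, hiHI⟩ := not_subset.1 hyz
    have hse : s i = ∅ := by
      rw [Finset.eq_empty_iff_forall_notMem]
      intro a ha
      simp only [hs, mem_filter, mem_univ, true_and] at ha
      obtain ⟨-, -, h3, h4⟩ := ha
      exact (mem_Dst.1 hiD) ((h3 fun h => hiHI (mem_union_left _ h)).trans
        (h4 fun h => hiHI (mem_union_right _ h)))
    have hc0 : (s i).card = 0 := by rw [hse]; rfl
    rw [Finset.prod_eq_zero (mem_univ i) hc0, if_neg hyz, mul_zero]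
    simp

def Cmat (x : ∀ i, U i) (G a : Finset (Fin n)) : Matrix (∀ i, U i) (∀ i, U i) F :=
  fun y z => if Dst x y = G ∧ Dst x z = G ∧ Dst y z = a then 1 else 0

lemma Bmat_eq_sum_Cmat (x : ∀ i, U i) (G B : Finset (Fin n)) :
    Bmat F x G B G = ∑ b ∈ B.powerset, Cmat F x G b := by
  classical
  ext y z
  rw [Bmat_apply, Matrix.sum_apply]
  have hterm : ∀ b : Finset (Fin n), (Cmat F x G b : Matrix (∀ i, U i) (∀ i, U i) F) y z
      = if Dst y z = b then (if Dst x y = G ∧ Dst x z = G then (1:F) else 0) else 0 := by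
    intro b
    simp only [Cmat]
    by_cases h1 : Dst y z = b <;> by_cases h2 : Dst x y = G ∧ Dst x z = G <;>
      simp [h1, h2]
  simp only [hterm]
  rw [Finset.sum_ite_eq]
  by_cases h1 : Dst x y = G <;> by_cases h2 : Dst x z = G <;> by_cases h3 : Dst y z ⊆ B <;>
    simp [h1, h2, h3, mem_powerset]

lemma Cmat_mem_span (u : Fin n → ℕ) (x : ∀ i, U i) (G : Finset (Fin n)) {a : Finset (Fin n)}
    (ha : a ⊆ G.filter (fun i => 2 < u i)) :
    Cmat F x G a ∈ Submodule.span F (Set.range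
      (fun b : {b : Finset (Fin n) // b ⊆ G.filter (fun i => 2 < u i)} =>
        Bmat F x G b.val G)) := by
  classical
  induction a using Finset.strongInduction with
  | _ a ih =>
    have hB : Bmat F x G a G ∈ Submodule.span F (Set.range
        (fun b : {b : Finset (Fin n) // b ⊆ G.filter (fun i => 2 < u i)} =>
          Bmat F x G b.val G)) := Submodule.subset_span ⟨⟨a, ha⟩, rfl⟩
    have hsum : Cmat F x G a + ∑ b ∈ a.powerset.erase a, Cmat F x G b = Bmat F x G a G := by
      rw [Bmat_eq_sum_Cmat]
      exact Finset.add_sum_erase _ _ (mem_powerset_self a)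
    rw [eq_sub_of_add_eq hsum]
    refine Submodule.sub_mem _ hB (Submodule.sum_mem _ ?_)
    intro b hb
    obtain ⟨hbne, hbs⟩ := mem_erase.1 hb
    exact ih b (Finset.ssubset_iff_subset_ne.2 ⟨mem_powerset.1 hbs, hbne⟩)
      ((mem_powerset.1 hbs).trans ha)

lemma exists_pair (u : Fin n → ℕ) (hu : ∀ i, Fintype.card (U i) = u i)
    (h2 : ∀ i, 2 ≤ u i) (x : ∀ i, U i) (G : Finset (Fin n)) (a : Finset (Fin n)) :
    ∃ y z : ∀ i, U i, a ⊆ G.filter (fun i => 2 < u i) →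
      Dst x y = G ∧ Dst x z = G ∧ Dst y z = a := by
  classical
  have hw : ∀ i, ∃ b : U i, b ≠ x i := by
    intro i
    have := h2 i
    exact Fintype.exists_ne_of_one_lt_card (by rw [hu i]; omega) (x i)
  choose w hwx using hw
  have hv : ∀ i, ∃ c : U i, 2 < u i → (c ≠ x i ∧ c ≠ w i) := by
    intro i
    by_cases h3 : 2 < u i
    · have hcard : ({x i, w i} : Finset (U i)).card < Fintype.card (U i) := by
        have h1 : ({x i, w i} : Finset (U i)).card ≤ 2 :=
          (Finset.card_insert_le _ _).trans (by simp)
        have h4 := hu i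
        omega
      obtain ⟨c, hc⟩ : ∃ c, c ∉ ({x i, w i} : Finset (U i)) := by
        by_contra hcon
        push_neg at hcon
        have hsub : (univ : Finset (U i)) ⊆ {x i, w i} := fun c _ => hcon c
        have := Finset.card_le_card hsub
        rw [Finset.card_univ] at this
        omega
      refine ⟨c, fun _ => ⟨fun h => hc ?_, fun h => hc ?_⟩⟩
      · simp [h]
      · simp [h]
    · exact ⟨x i, fun h => absurd h h3⟩
  choose v hvp using hv
  refine ⟨fun i => if i ∈ G then w i else x i,
    fun i => if i ∈ a then v i else if i ∈ G then w i else x i, fun haQ => ⟨?_, ?_, ?_⟩⟩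
  · ext i
    rw [mem_Dst]
    by_cases hiG : i ∈ G <;> simp [hiG, (hwx i).symm]
  · ext i
    rw [mem_Dst]
    by_cases hia : i ∈ a
    · obtain ⟨hiG, hui⟩ := mem_filter.1 (haQ hia)
      simp only [hia, if_pos, hiG, iff_true]
      exact ((hvp i hui).1).symm
    · by_cases hiG : i ∈ G <;> simp [hia, hiG, (hwx i).symm]
  · ext i
    rw [mem_Dst]
    by_cases hia : i ∈ a
    · obtain ⟨hiG, hui⟩ := mem_filter.1 (haQ hia)
      simp only [hia, if_pos, hiG, iff_true]
      exact ((hvp i hui).2).symm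
    · simp [hia]

lemma exists_perm {α : Type*} [DecidableEq α] (x p q p' q' : α)
    (h1 : p = x ↔ p' = x) (h2 : q = x ↔ q' = x) (h3 : p = q ↔ p' = q') :
    ∃ g : Equiv.Perm α, g x = x ∧ g p = p' ∧ g q = q' := by
  classical
  set σ := Equiv.swap p p' with hσ
  set τ := Equiv.swap (σ q) q' with hτ
  have hσx : σ x = x := by
    by_cases hp : p = x
    · simp [hσ, hp, h1.1 hp, Equiv.swap_self]
    · exact Equiv.swap_apply_of_ne_of_ne (fun h => hp h.symm)
        (fun h => (fun hh => hp (h1.2 hh)) h.symm)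
  have hσp : σ p = p' := Equiv.swap_apply_left p p'
  have hτx : τ x = x := by
    by_cases hq : q = x
    · have hσq : σ q = x := by rw [hq]; exact hσx
      simp [hτ, hσq, h2.1 hq, Equiv.swap_self]
    · have h1q : σ q ≠ x := by
        rw [← hσx]; exact fun h => hq (σ.injective h)
      have h2q : q' ≠ x := fun h => hq (h2.2 h)
      exact Equiv.swap_apply_of_ne_of_ne (Ne.symm h1q) (Ne.symm h2q)
  have hτp' : τ p' = p' := by
    by_cases hq : q = p
    · have hσq : σ q = p' := by rw [hq, hσp]
      have hq' : q' = p' := (h3.1 hq.symm).symm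
      simp [hτ, hσq, hq', Equiv.swap_self]
    · have h1q : σ q ≠ p' := by
        rw [← hσp]; exact fun h => hq (σ.injective h)
      have h2q : q' ≠ p' := fun h => hq ((h3.2 h.symm).symm)
      exact Equiv.swap_apply_of_ne_of_ne (Ne.symm h1q) (Ne.symm h2q)
  refine ⟨σ.trans τ, ?_, ?_, ?_⟩
  · simp only [Equiv.trans_apply, hσx, hτx]
  · simp only [Equiv.trans_apply, hσp, hτp']
  · simp only [Equiv.trans_apply, hτ, Equiv.swap_apply_left]

lemma Dst_perm (g : ∀ i, Equiv.Perm (U i)) (y z : ∀ i, U i) :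
    Dst (fun i => g i (y i)) (fun i => g i (z i)) = Dst y z := by
  ext i
  simp only [mem_Dst]
  exact (g i).injective.ne_iff

def Cent (x : ∀ i, U i) : Subalgebra F (Matrix (∀ i, U i) (∀ i, U i) F) where
  carrier := {m | ∀ g : ∀ i, Equiv.Perm (U i), (∀ i, g i (x i) = x i) →
      ∀ y z, m (fun i => g i (y i)) (fun i => g i (z i)) = m y z}
  add_mem' := by
    intro a b ha hb g hg y z
    simp only [Matrix.add_apply, ha g hg y z, hb g hg y z]
  zero_mem' := by
    intro g hg y z
    simp
  mul_mem' := by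
    intro a b ha hb g hg y z
    rw [Matrix.mul_apply, Matrix.mul_apply]
    refine (Fintype.sum_equiv (Equiv.piCongrRight g) _ _ ?_).symm
    intro w
    have h1 : a y w = a (fun i => g i (y i)) (fun i => g i (w i)) := (ha g hg y w).symm
    have h2 : b w z = b (fun i => g i (w i)) (fun i => g i (z i)) := (hb g hg w z).symm
    rw [h1, h2]
    rfl
  one_mem' := by
    intro g hg y z
    simp only [Matrix.one_apply]
    by_cases h : y = z
    · subst h; simp
    · rw [if_neg h, if_neg (fun hc => h (funext fun i => (g i).injective (congrFun hc i)))]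
  algebraMap_mem' := by
    intro r g hg y z
    rw [Matrix.algebraMap_matrix_apply, Matrix.algebraMap_matrix_apply]
    by_cases h : y = z
    · subst h; simp
    · rw [if_neg h, if_neg (fun hc => h (funext fun i => (g i).injective (congrFun hc i)))]

lemma Terw_le_Cent (x : ∀ i, U i) : TerwAlg F x ≤ Cent F x := by
  rw [TerwAlg]
  apply Algebra.adjoin_le
  rintro m (⟨S, rfl⟩ | ⟨S, rfl⟩)
  · intro g hg y z
    show adjMat F S _ _ = adjMat F S y z
    simp only [adjMat, Dst_perm]
  · intro g hg y z
    show dualIdem F x S _ _ = dualIdem F x S y z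
    have hD : ∀ w : ∀ i, U i, Dst x (fun i => g i (w i)) = Dst x w := by
      intro w
      ext i
      simp only [mem_Dst]
      conv_lhs => rw [← hg i]
      exact (g i).injective.ne_iff
    simp only [dualIdem, Matrix.diagonal_apply, hD]
    by_cases h : y = z
    · subst h; simp
    · rw [if_neg (fun hc => h (funext fun i => (g i).injective (congrFun hc i))), if_neg h]

lemma Dst_subset_Q (u : Fin n → ℕ) (hu : ∀ i, Fintype.card (U i) = u i)
    (x : ∀ i, U i) {G : Finset (Fin n)} {y z : ∀ i, U i}
    (hy : Dst x y = G) (hz : Dst x z = G) :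
    Dst y z ⊆ G.filter (fun i => 2 < u i) := by
  intro i hi
  have hyz : y i ≠ z i := mem_Dst.1 hi
  have hiG : i ∈ G := by
    by_contra hiG
    have h1 : x i = y i := by
      by_contra h; exact hiG (by rw [← hy]; exact mem_Dst.2 h)
    have h2' : x i = z i := by
      by_contra h; exact hiG (by rw [← hz]; exact mem_Dst.2 h)
    exact hyz (h1 ▸ h2')
  have hxy : x i ≠ y i := mem_Dst.1 (by rw [hy]; exact hiG)
  have hxz : x i ≠ z i := mem_Dst.1 (by rw [hz]; exact hiG)
  refine mem_filter.2 ⟨hiG, ?_⟩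
  have hcard : ({x i, y i, z i} : Finset (U i)).card = 3 := by
    rw [Finset.card_insert_of_notMem (by simp [hxy, hxz]),
      Finset.card_insert_of_notMem (by simp [hyz]), Finset.card_singleton]
  have hle := Finset.card_le_univ ({x i, y i, z i} : Finset (U i))
  rw [hu i] at hle
  omega

lemma compress_mem_span (u : Fin n → ℕ) (hu : ∀ i, Fintype.card (U i) = u i)
    (h2 : ∀ i, 2 ≤ u i) (x : ∀ i, U i) (G : Finset (Fin n))
    {m : Matrix (∀ i, U i) (∀ i, U i) F} (hm : m ∈ Cent F x) :
    dualIdem F x G * m * dualIdem F x G ∈ Submodule.span F (Set.range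
      (fun b : {b : Finset (Fin n) // b ⊆ G.filter (fun i => 2 < u i)} =>
        Bmat F x G b.val G)) := by
  classical
  choose Y Z h using exists_pair u hu h2 x G
  have hdecomp : dualIdem F x G * m * dualIdem F x G
      = ∑ a ∈ (G.filter (fun i => 2 < u i)).powerset, m (Y a) (Z a) • Cmat F x G a := by
    ext y z
    rw [Matrix.sum_apply]
    have lhs_eq : (dualIdem F x G * m * dualIdem F x G) y z
        = (if Dst x y = G then (1:F) else 0) * m y z * (if Dst x z = G then 1 else 0) := by
      simp only [dualIdem, Matrix.mul_diagonal, Matrix.diagonal_mul]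
    rw [lhs_eq]
    simp only [Matrix.smul_apply, Cmat, smul_eq_mul]
    by_cases hy : Dst x y = G
    swap
    · simp [hy]
    by_cases hz : Dst x z = G
    swap
    · simp [hz]
    simp only [hy, hz, true_and, if_true, one_mul, mul_one]
    have hsub : Dst y z ⊆ G.filter (fun i => 2 < u i) := Dst_subset_Q u hu x hy hz
    simp only [mul_ite, mul_one, mul_zero]
    rw [Finset.sum_ite_eq, if_pos (mem_powerset.2 hsub)]
    obtain ⟨hY1, hZ1, hYZ1⟩ := h (Dst y z) hsub
    have hgex : ∀ i, ∃ gi : Equiv.Perm (U i),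
        gi (x i) = x i ∧ gi (Y (Dst y z) i) = y i ∧ gi (Z (Dst y z) i) = z i := by
      intro i
      apply exists_perm
      · have hA : x i ≠ Y (Dst y z) i ↔ i ∈ G := by rw [← hY1]; exact mem_Dst.symm.trans Iff.rfl
        have hB : x i ≠ y i ↔ i ∈ G := by rw [← hy]; exact mem_Dst.symm.trans Iff.rfl
        have := not_iff_not.2 (hA.trans hB.symm)
        push_neg at this
        exact ⟨fun hh => (this.1 hh.symm).symm, fun hh => (this.2 hh.symm).symm⟩
      · have hA : x i ≠ Z (Dst y z) i ↔ i ∈ G := by rw [← hZ1]; exact mem_Dst.symm.trans Iff.rfl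
        have hB : x i ≠ z i ↔ i ∈ G := by rw [← hz]; exact mem_Dst.symm.trans Iff.rfl
        have := not_iff_not.2 (hA.trans hB.symm)
        push_neg at this
        exact ⟨fun hh => (this.1 hh.symm).symm, fun hh => (this.2 hh.symm).symm⟩
      · have hA : Y (Dst y z) i ≠ Z (Dst y z) i ↔ i ∈ Dst y z := by
          conv_rhs => rw [← hYZ1]
          exact mem_Dst.symm
        have hB : y i ≠ z i ↔ i ∈ Dst y z := mem_Dst.symm.trans Iff.rfl
        have := not_iff_not.2 (hA.trans hB.symm)
        push_neg at this
        exact this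
    choose g hg using hgex
    have hinv := hm g (fun i => (hg i).1) (Y (Dst y z)) (Z (Dst y z))
    have hgy : (fun i => g i (Y (Dst y z) i)) = y := funext fun i => (hg i).2.1
    have hgz : (fun i => g i (Z (Dst y z) i)) = z := funext fun i => (hg i).2.2
    rw [hgy, hgz] at hinv
    exact hinv
  rw [hdecomp]
  refine Submodule.sum_mem _ ?_
  intro a ha
  exact Submodule.smul_mem _ _ (Cmat_mem_span F u x G (mem_powerset.1 ha))

lemma Bmat_mem_Terw (x : ∀ i, U i) (G B : Finset (Fin n)) :
    Bmat F x G B G ∈ TerwAlg F x := by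
  rw [Bmat]
  refine Subalgebra.sum_mem _ ?_
  intro b _
  exact mul_mem (mul_mem (Algebra.subset_adjoin (Or.inr ⟨G, rfl⟩))
    (Algebra.subset_adjoin (Or.inl ⟨b, rfl⟩))) (Algebra.subset_adjoin (Or.inr ⟨G, rfl⟩))

lemma compress_Bmat (x : ∀ i, U i) (G B : Finset (Fin n)) :
    dualIdem F x G * Bmat F x G B G * dualIdem F x G = Bmat F x G B G := by
  ext y z
  have lhs_eq : (dualIdem F x G * Bmat F x G B G * dualIdem F x G) y z
      = (if Dst x y = G then (1:F) else 0) * Bmat F x G B G y z *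
          (if Dst x z = G then 1 else 0) := by
    simp only [dualIdem, Matrix.mul_diagonal, Matrix.diagonal_mul]
  rw [lhs_eq, Bmat_apply]
  by_cases h1 : Dst x y = G <;> by_cases h2 : Dst x z = G <;> simp [h1, h2]

theorem stmt_15 (hn : 1 ≤ n) (u : Fin n → ℕ) (hu : ∀ i, Fintype.card (U i) = u i)
    (h2 : ∀ i, 2 ≤ u i) (x : ∀ i, U i) (G : Finset (Fin n)) :
    LinearIndependent F
        (fun a : {a : Finset (Fin n) // a ⊆ G.filter (fun i => 2 < u i)} =>
          Bmat F x G a.val G) ∧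
      (Submodule.span F
          (Set.range (fun a : {a : Finset (Fin n) // a ⊆ G.filter (fun i => 2 < u i)} =>
            Bmat F x G a.val G)) : Set (Matrix (∀ i, U i) (∀ i, U i) F))
        = {m | ∃ t ∈ TerwAlg F x, m = dualIdem F x G * t * dualIdem F x G} ∧
      ∀ H I : Finset (Fin n), H ⊆ G.filter (fun i => 2 < u i) →
        I ⊆ G.filter (fun i => 2 < u i) →
        Bmat F x G H G * Bmat F x G I G = (kval u (H ∩ I) : F) • Bmat F x G (H ∪ I) G := by
  classical
  refine ⟨?_, ?_, fun H I hH hI => Bmat_mul F u hu x G hH hI⟩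
  · -- linear independence
    rw [Fintype.linearIndependent_iff]
    intro c hc
    choose Y Z h using exists_pair u hu h2 x G
    have heval : ∀ a : {a : Finset (Fin n) // a ⊆ G.filter (fun i => 2 < u i)},
        ∑ i : {a : Finset (Fin n) // a ⊆ G.filter (fun i => 2 < u i)},
          c i * (if a.val ⊆ i.val then (1:F) else 0) = 0 := by
      intro a
      obtain ⟨hY1, hZ1, hYZ1⟩ := h a.val a.2
      have happ := congrArg (fun M : Matrix (∀ i, U i) (∀ i, U i) F =>
        M (Y a.val) (Z a.val)) hc
      simp only [Matrix.sum_apply, Matrix.smul_apply, Matrix.zero_apply, smul_eq_mul] at happ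
      have hBapp : ∀ i : {a : Finset (Fin n) // a ⊆ G.filter (fun i => 2 < u i)},
          Bmat F x G i.val G (Y a.val) (Z a.val) = if a.val ⊆ i.val then (1:F) else 0 := by
        intro i
        rw [Bmat_apply]
        simp [hY1, hZ1, hYZ1]
      simp only [hBapp] at happ
      exact happ
    have key : ∀ (k : ℕ) (a : {a : Finset (Fin n) // a ⊆ G.filter (fun i => 2 < u i)}),
        (G.filter (fun i => 2 < u i)).card - a.val.card ≤ k → c a = 0 := by
      intro k
      induction k with
      | zero =>
        intro a hk
        have hle : a.val.card ≤ (G.filter (fun i => 2 < u i)).card := Finset.card_le_card a.2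
        have haQ : a.val = G.filter (fun i => 2 < u i) :=
          Finset.eq_of_subset_of_card_le a.2 (by omega)
        have heq := heval a
        rw [← Finset.add_sum_erase _ _ (mem_univ a)] at heq
        rw [Finset.sum_eq_zero, add_zero, if_pos (subset_refl _), mul_one] at heq
        · exact heq
        · intro i hi
          rw [if_neg, mul_zero]
          intro hsub
          have hiQ : i.val ⊆ a.val := by rw [haQ]; exact i.2
          have hieq : i.val = a.val := Finset.Subset.antisymm hiQ hsub
          exact (mem_erase.1 hi).1 (Subtype.ext hieq)
      | succ k ih =>
        intro a hk
        have heq := heval a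
        rw [← Finset.add_sum_erase _ _ (mem_univ a)] at heq
        rw [Finset.sum_eq_zero, add_zero, if_pos (subset_refl _), mul_one] at heq
        · exact heq
        · intro i hi
          by_cases hsub : a.val ⊆ i.val
          · have hne : a.val ≠ i.val := fun hh => (mem_erase.1 hi).1 (Subtype.ext hh.symm)
            have hlt : a.val.card < i.val.card :=
              Finset.card_lt_card (Finset.ssubset_iff_subset_ne.2 ⟨hsub, hne⟩)
            have hle : i.val.card ≤ (G.filter (fun i => 2 < u i)).card :=
              Finset.card_le_card i.2
            rw [ih i (by omega), zero_mul]
          · rw [if_neg hsub, mul_zero]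
    intro a
    exact key ((G.filter (fun i => 2 < u i)).card - a.val.card) a le_rfl
  · -- span equality
    ext m
    simp only [SetLike.mem_coe, Set.mem_setOf_eq]
    constructor
    · intro hmem
      have : m ∈ TerwAlg F x ∧ dualIdem F x G * m * dualIdem F x G = m := by
        induction hmem using Submodule.span_induction with
        | mem v hv =>
          obtain ⟨a, rfl⟩ := hv
          exact ⟨Bmat_mem_Terw F x G a.val, compress_Bmat F x G a.val⟩
        | zero => exact ⟨Subalgebra.zero_mem _, by simp⟩
        | add v w hv hw ihv ihw =>
          refine ⟨Subalgebra.add_mem _ ihv.1 ihw.1, ?_⟩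
          rw [mul_add, add_mul, ihv.2, ihw.2]
        | smul r v hv ihv =>
          refine ⟨Subalgebra.smul_mem _ ihv.1 r, ?_⟩
          rw [Matrix.mul_smul, Matrix.smul_mul, ihv.2]
      exact ⟨m, this.1, this.2.symm⟩
    · rintro ⟨t, ht, rfl⟩
      exact compress_mem_span F u hu h2 x G (Terw_le_Cent F x ht)
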